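/- Let $m$ be prime and for each $k \ge 1$ let $R_k = \operatorname{diag}[p_{k,1},\dots,p_{k,n}]$ be expanding integer diagonal matrices and $D_k \subset \mathbb{Z}^n$ digit sets with $\#D_k = m$ whose mask-polynomial zero sets satisfy $\mathcal{Z}(m_{D_k}) = \bigcup_{i=1}^{\phi(k)}\bigcup_{j=1}^{m-1}\left(\frac{j}{m}\nu_{k,i}+\mathbb{Z}^n\right)$ with all coordinates of each $\nu_{k,i}$ in $[1,m-1]$. If the Moran measure $\mu = \delta_{R_1^{-1}D_1} * \delta_{(R_2R_1)^{-1}D_2} * \cdots$ admits an infinite orthogonal set of exponentials in $L^2(\mu)$, then for each coordinate $j \in \{1,\dots,n\}$, infinitely many of the integers $p_{k,j}$ are divisible by $m$. -/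

import Mathlib

open MeasureTheory

/-- The canonical embedding `ℤⁿ → ℝⁿ`. -/
noncomputable def ιv {n : ℕ} (z : Fin n → ℤ) : EuclideanSpace ℝ (Fin n) :=
  WithLp.toLp 2 (fun t => (z t : ℝ))

/-- For a Moran measure generated by expanding diagonal matrices
`R_k = diag[p_{k,1},…,p_{k,n}]` and Sierpinski-type digit sets `D_k` of prime cardinality
`m` (so that `Z(μ̂) = ⋃_k R₁⋯R_k Z(m_{D_k})`), if `L²(μ)` admits an infinite orthogonal set
of exponentials, then for each coordinate `j` infinitely many `p_{k,j}` are divisible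
by `m`. -/
theorem stmt19 {n : ℕ} (m : ℕ) (hm : m.Prime)
    (p : ℕ → Fin n → ℤ) (hexp : ∀ k, 1 ≤ k → ∀ t, 1 < |p k t|)
    (D : ℕ → Finset (Fin n → ℤ)) (hcard : ∀ k, 1 ≤ k → (D k).card = m)
    (φ : ℕ → ℕ) (ν : ℕ → ℕ → (Fin n → ℤ))
    (hν : ∀ k, 1 ≤ k → ∀ i ∈ Finset.Icc 1 (φ k), ∀ t, 1 ≤ ν k i t ∧ ν k i t ≤ (m : ℤ) - 1)
    (hZ : ∀ k, 1 ≤ k →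
      {ξ : EuclideanSpace ℝ (Fin n) | ∑ d ∈ D k,
          Complex.exp (2 * (Real.pi : ℂ) * Complex.I * ((inner ℝ ξ (ιv d) : ℝ) : ℂ)) = 0}
        = {ξ : EuclideanSpace ℝ (Fin n) | ∃ i ∈ Finset.Icc 1 (φ k),
            ∃ j ∈ Finset.Icc 1 (m - 1), ∃ z : Fin n → ℤ,
              ξ = (WithLp.toLp 2 (fun t => (j : ℝ) / m * ν k i t + z t) : EuclideanSpace ℝ (Fin n))})
    (Λ : Set (EuclideanSpace ℝ (Fin n))) (hinf : Λ.Infinite)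
    (horth : ∀ a ∈ Λ, ∀ b ∈ Λ, a ≠ b → ∃ k, 1 ≤ k ∧ ∃ ξ : EuclideanSpace ℝ (Fin n),
        (∑ d ∈ D k,
            Complex.exp (2 * (Real.pi : ℂ) * Complex.I * ((inner ℝ ξ (ιv d) : ℝ) : ℂ)) = 0) ∧
        a - b = (WithLp.toLp 2 (fun t => (∏ j ∈ Finset.Icc 1 k, (p j t : ℝ)) * ξ t) :
          EuclideanSpace ℝ (Fin n))) :
    ∀ t : Fin n, {k : ℕ | 1 ≤ k ∧ (m : ℤ) ∣ p k t}.Infinite := by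
  classical
  intro t
  by_contra hfin
  rw [Set.not_infinite] at hfin
  set M : ℕ := ∑ l ∈ hfin.toFinset, ((p l t).natAbs.factorization m) with hMdef
  have hm2 : 2 ≤ m := hm.two_le
  have hmZ : Prime (m : ℤ) := Nat.prime_iff_prime_int.mp hm
  have hpne : ∀ k, 1 ≤ k → p k t ≠ 0 := by
    intro k hk h
    have := hexp k hk t
    rw [h] at this
    simp at this
  -- m-adic valuation of partial products is at most M
  have hProd : ∀ k, 1 ≤ k → ¬ ((m : ℤ) ^ (M + 1) ∣ ∏ l ∈ Finset.Icc 1 k, p l t) := by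
    intro k hk hdvd
    have hNat : m ^ (M + 1) ∣ (∏ l ∈ Finset.Icc 1 k, p l t).natAbs := by
      have h := Int.natAbs_dvd_natAbs.mpr hdvd
      simpa [Int.natAbs_pow] using h
    have hprodAbs : (∏ l ∈ Finset.Icc 1 k, p l t).natAbs
        = ∏ l ∈ Finset.Icc 1 k, (p l t).natAbs := map_prod Int.natAbsHom _ _
    rw [hprodAbs] at hNat
    have hne : ∀ l ∈ Finset.Icc 1 k, (p l t).natAbs ≠ 0 := by
      intro l hl
      simpa using hpne l (Finset.mem_Icc.mp hl).1
    have hN0 : (∏ l ∈ Finset.Icc 1 k, (p l t).natAbs) ≠ 0 :=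
      Finset.prod_ne_zero_iff.mpr hne
    have hle := (Nat.Prime.pow_dvd_iff_le_factorization hm hN0).mp hNat
    rw [Nat.factorization_prod hne] at hle
    have hle' : M + 1 ≤ ∑ l ∈ Finset.Icc 1 k, (p l t).natAbs.factorization m := by
      simpa using hle
    have hbound : ∑ l ∈ Finset.Icc 1 k, (p l t).natAbs.factorization m ≤ M := by
      have hfilter : ∑ l ∈ (Finset.Icc 1 k).filter (fun l => (m : ℤ) ∣ p l t),
          (p l t).natAbs.factorization m
          = ∑ l ∈ Finset.Icc 1 k, (p l t).natAbs.factorization m := by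
        apply Finset.sum_filter_of_ne
        intro l hl hne0
        by_contra hnd
        apply hne0
        apply Nat.factorization_eq_zero_of_not_dvd
        intro h
        exact hnd (Int.natAbs_dvd_natAbs.mp (by simpa using h))
      rw [← hfilter]
      apply Finset.sum_le_sum_of_subset
      intro l hl
      rw [Finset.mem_filter] at hl
      rw [Set.Finite.mem_toFinset]
      exact ⟨(Finset.mem_Icc.mp hl.1).1, hl.2⟩
    omega
  -- Key lemma: differences of points of Λ, scaled by m in coordinate t,
  -- are integers not divisible by m^(M+1).
  have key : ∀ a ∈ Λ, ∀ b ∈ Λ, a ≠ b → ∃ c : ℤ,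
      (m : ℝ) * (a t - b t) = (c : ℝ) ∧ ¬ ((m : ℤ) ^ (M + 1) ∣ c) := by
    intro a ha b hb hab
    obtain ⟨k, hk, ξ, hξ, hdiff⟩ := horth a ha b hb hab
    have hmem : ξ ∈ {ξ : EuclideanSpace ℝ (Fin n) | ∃ i ∈ Finset.Icc 1 (φ k),
        ∃ j ∈ Finset.Icc 1 (m - 1), ∃ z : Fin n → ℤ,
          ξ = (WithLp.toLp 2 (fun t => (j : ℝ) / m * ν k i t + z t) : EuclideanSpace ℝ (Fin n))} := by
      rw [← hZ k hk]; exact hξ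
    obtain ⟨i, hi, j, hj, z, hξeq⟩ := hmem
    have habt : a t - b t
        = (∏ l ∈ Finset.Icc 1 k, (p l t : ℝ)) * ((j : ℝ) / m * (ν k i t : ℝ) + (z t : ℝ)) := by
      have h1 : a t - b t = (∏ l ∈ Finset.Icc 1 k, (p l t : ℝ)) * ξ t := by
        simpa using congrArg (fun v => v t) hdiff
      have h2 : ξ t = (j : ℝ) / m * (ν k i t : ℝ) + (z t : ℝ) := by simp [hξeq]
      rw [h1, h2]
    refine ⟨(∏ l ∈ Finset.Icc 1 k, p l t) * ((j : ℤ) * ν k i t + m * z t), ?_, ?_⟩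
    · rw [habt]
      have hm0 : (m : ℝ) ≠ 0 := by positivity
      push_cast
      field_simp
    · intro hdvd
      have hjν : ¬ ((m : ℤ) ∣ (j : ℤ) * ν k i t + m * z t) := by
        intro h
        have h' : (m : ℤ) ∣ (j : ℤ) * ν k i t := by
          simpa using h.sub (dvd_mul_right (m : ℤ) (z t))
        rcases hmZ.dvd_mul.mp h' with h'' | h''
        · have hjd : m ∣ j := Int.ofNat_dvd.mp h''
          have hj1 := (Finset.mem_Icc.mp hj).1
          have hj2 := (Finset.mem_Icc.mp hj).2
          have := Nat.le_of_dvd (by omega) hjd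
          omega
        · have hν1 := (hν k hk i hi t).1
          have hν2 := (hν k hk i hi t).2
          have := Int.le_of_dvd (by omega) h''
          omega
      exact hProd k hk (hmZ.pow_dvd_of_dvd_mul_right _ hjν hdvd)
  -- Pigeonhole argument
  obtain ⟨lam0, hlam0⟩ := hinf.nonempty
  haveI : NeZero (m ^ (M + 1)) := ⟨pow_ne_zero _ (by omega)⟩
  set f : EuclideanSpace ℝ (Fin n) → ZMod (m ^ (M + 1)) :=
    fun a => ((⌊(m : ℝ) * (a t - lam0 t)⌋ : ℤ) : ZMod (m ^ (M + 1))) with hfdef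
  have hfloor : ∀ a ∈ Λ, ((⌊(m : ℝ) * (a t - lam0 t)⌋ : ℤ) : ℝ) = (m : ℝ) * (a t - lam0 t) := by
    intro a ha
    by_cases h : a = lam0
    · simp [h]
    · obtain ⟨c, hc, -⟩ := key a ha lam0 hlam0 h
      rw [hc, Int.floor_intCast]
  obtain ⟨x, hx, y, hy, hxy, hfxy⟩ :=
    hinf.exists_ne_map_eq_of_mapsTo (Set.mapsTo_univ f Λ) Set.finite_univ
  obtain ⟨d, hd, hnd⟩ := key x hx y hy hxy
  apply hnd
  have h1 : ((⌊(m : ℝ) * (x t - lam0 t)⌋ - ⌊(m : ℝ) * (y t - lam0 t)⌋ : ℤ) : ℝ) = (d : ℝ) := by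
    push_cast
    rw [hfloor x hx, hfloor y hy, ← hd]
    ring
  have h2 : ⌊(m : ℝ) * (x t - lam0 t)⌋ - ⌊(m : ℝ) * (y t - lam0 t)⌋ = d := by
    exact_mod_cast h1
  have h3 : ((d : ℤ) : ZMod (m ^ (M + 1))) = 0 := by
    rw [← h2]
    push_cast
    rw [sub_eq_zero]
    exact hfxy
  have h4 : ((m ^ (M + 1) : ℕ) : ℤ) ∣ d := (ZMod.intCast_zmod_eq_zero_iff_dvd _ _).mp h3
  have h5 : (m : ℤ) ^ (M + 1) ∣ d := by exact_mod_cast h4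
  exact h5
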